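/- arXiv:1705.02884 — 3 statements merged into one kernel-verified Lean document; each statement's English description precedes it below -/
import Mathlib

section
/- In any reachable global state S of the lazy list, if n is an unmarked node with successor n.next, then for any key strictly between n.val and n.next.val, no node with that key belongs to the abstract set AbS(S). -/
/-- Reachability from `head` via next pointers. -/
def ReachFrom {Node : Type} (nxt : Node → Option Node) (head n : Node) : Prop :=
  Relation.ReflTransGen (fun a b => nxt a = some b) head n

/-- The abstract set of a lazy-list state: the unmarked nodes reachable from
`Head`. -/
def AbS {Node : Type} (nxt : Node → Option Node) (marked : Node → Bool)
    (head : Node) : Set Node :=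
  {n | ReachFrom nxt head n ∧ marked n = false}

/-- Reachability is linear for deterministic successor functions. -/
lemma reach_total {Node : Type} (nxt : Node → Option Node) :
    ∀ a b c, ReachFrom nxt a b → ReachFrom nxt a c →
      ReachFrom nxt b c ∨ ReachFrom nxt c b := by
  intro a b c hab
  induction hab using Relation.ReflTransGen.head_induction_on with
  | refl => intro hac; exact Or.inl hac
  | head h _ ih =>
    rename_i x y _
    intro hac
    rcases hac.cases_head with rfl | ⟨c', hc', hcc⟩
    · exact Or.inr (Relation.ReflTransGen.head h (by assumption))
    · have : c' = y := by
        simp only [h] at hc'; exact (Option.some.injEq _ _).mp hc'.symm ▸ rfl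
      subst this
      exact ih hcc

lemma reach_le {Node : Type} (nxt : Node → Option Node) (val : Node → ℤ)
    (hsort : ∀ a b, nxt a = some b → val a < val b) :
    ∀ a b, ReachFrom nxt a b → val a ≤ val b := by
  intro a b hab
  induction hab with
  | refl => exact le_refl _
  | tail h hs ih => exact lt_of_le_of_lt ih (hsort _ _ hs) |>.le

/-- In any (reachable) global state `S` of the lazy list —
where the list is strictly sorted by key and every unmarked node is reachable
from `Head` — if `n` is an unmarked node with successor `n.next`, then for any
key strictly between `n.val` and `n.next.val`, no node with that key belongs
to the abstract set `AbS(S)`. -/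
theorem lazy_list_key_between_not_in_abs
    (Node : Type) (val : Node → ℤ) (nxt : Node → Option Node)
    (marked : Node → Bool) (head : Node)
    -- strict sortedness
    (hsort : ∀ a b, nxt a = some b → val a < val b)
    -- every unmarked node is reachable from Head
    (hreach : ∀ n, marked n = false → ReachFrom nxt head n)
    (n n' : Node) (key : ℤ)
    (hn : marked n = false) (hnxt : nxt n = some n')
    (h1 : val n < key) (h2 : key < val n') :
    ∀ m, val m = key → m ∉ AbS nxt marked head := by
  intro m hkey ⟨hmr, hmu⟩
  have hnr : ReachFrom nxt head n := hreach n hn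
  rcases reach_total nxt head m n hmr hnr with hmn | hnm
  · have := reach_le nxt val hsort m n hmn
    omega
  · rcases hnm.cases_head with rfl | ⟨c, hc, hcm⟩
    · omega
    · have hcn : c = n' := by rw [hnxt] at hc; exact Option.some.inj hc.symm
      have := reach_le nxt val hsort c m hcm
      rw [hcn] at this
      omega
end

section
/- In the lazy list, if a Remove(key) operation returns true, then a node with that key is in the abstract set in the pre-state of its linearization point (the write n2.marked = true), and no node with that key is in the abstract set in the post-state of the linearization point. -/
/-- Lazy list, `Remove(key)` returning `true`.
`Locate(key)` returned locked unmarked adjacent nodes `n1, n2` with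
`n1.val < key ≤ n2.val`, and the test `n2.val = key` succeeded.  The LP is the
logical-removal write `n2.marked := true`; keys are immutable and this write
is the only change between the pre- and post-state of the LP.  Then: in the
pre-state of the LP a node with key `key` is in the abstract set, and in the
post-state of the LP no node with key `key` is in the abstract set. -/
theorem remove_true_abs_pre_post
    (Node : Type) [DecidableEq Node]
    (val : Node → ℤ) (nxt : Node → Option Node)
    (marked : Node → Bool) (head : Node)
    (key : ℤ) (n1 n2 : Node)
    -- the list is strictly sorted in the pre-state
    (hsort : ∀ a b, nxt a = some b → val a < val b)
    -- every unmarked node is reachable from Head in the pre-state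
    (hreach : ∀ n, marked n = false → ReachFrom nxt head n)
    -- facts from Locate and the successful test n2.val = key
    (hadj : nxt n1 = some n2)
    (hm1 : marked n1 = false) (hm2 : marked n2 = false)
    (h1 : val n1 < key) (heq : val n2 = key) :
    -- pre-state of the LP: a node with key `key` is in the abstract set
    (∃ m, val m = key ∧ m ∈ AbS nxt marked head) ∧
    -- post-state of the LP (after the write n2.marked := true):
    -- no node with key `key` is in the abstract set
    (∀ m, val m = key →
      m ∉ AbS nxt (Function.update marked n2 true) head) := by
  have hmono : ∀ a b, ReachFrom nxt a b → a ≠ b → val a < val b := by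
    intro a b hab
    induction hab with
    | refl => intro h; exact absurd rfl h
    | tail hxy hyz ih =>
      intro _
      rcases eq_or_ne a _ with h | h
      · exact h ▸ hsort _ _ hyz
      · exact (ih h).trans (hsort _ _ hyz)
  constructor
  · exact ⟨n2, heq, hreach n2 hm2, hm2⟩
  · rintro m hm ⟨hr, hu⟩
    have hru : Relator.RightUnique (fun a b => nxt a = some b) := by
      intro a b c hb hc; rw [hb] at hc; exact Option.some.inj hc
    have hmn2 : m = n2 := by
      rcases Relation.ReflTransGen.total_of_right_unique hru hr (hreach n2 hm2) with h | h
      · by_contra hne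
        have := hmono _ _ h hne; rw [hm, heq] at this; exact lt_irrefl key this
      · by_contra hne
        have := hmono _ _ h (Ne.symm hne); rw [hm, heq] at this
        exact lt_irrefl key this
    rw [hmn2, Function.update_self] at hu
    exact Bool.noConfusion hu
end

section
/- In the lazy list, if a Contains(key) operation returns false and no concurrent Add(key) succeeds during its execution, and the node n_{x-1} at which the traversal's last advance occurred is unmarked at that read, then no node with that key is in the abstract set in the pre-state of the LP read: from n_{x-1}.val < key < n_x.val, n_{x-1} unmarked, and n_{x-1}.next = n_x, it follows node(key) ∉ AbS at that state. -/
/-- Lazy list, `Contains(key)` returning `false` with no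
concurrent successful `Add(key)` during its execution.  The traversal's last
advance read the node `n_{x-1}` (unmarked at that read) with
`n_{x-1}.next = n_x`, and `n_{x-1}.val < key < n_x.val`.  Then in the
pre-state of the LP read no node with key `key` is in the abstract set:
from `n_{x-1}.val < key < n_x.val`, `n_{x-1}` unmarked, and
`n_{x-1}.next = n_x`, it follows that `node(key) ∉ AbS` at that state. -/
theorem contains_false_abs_pre
    (Node : Type)
    (val : Node → ℤ) (nxt : Node → Option Node)
    (marked : Node → Bool) (head : Node)
    (key : ℤ) (nxm1 nx : Node)
    -- strict sortedness (pre-state of the LP)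
    (hsort : ∀ a b, nxt a = some b → val a < val b)
    -- every unmarked node is reachable from Head (pre-state of the LP)
    (hreach : ∀ m, marked m = false → ReachFrom nxt head m)
    -- n_{x-1} is unmarked at the read, with successor n_x
    (hm : marked nxm1 = false) (hadj : nxt nxm1 = some nx)
    (h1 : val nxm1 < key) (h2 : key < val nx) :
    ∀ m, val m = key → m ∉ AbS nxt marked head := by
  have mono : ∀ a b, ReachFrom nxt a b → val a ≤ val b := by
    intro a b h
    induction h with
    | refl => exact le_refl _
    | tail _ hstep ih => exact le_of_lt (lt_of_le_of_lt ih (hsort _ _ hstep))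
  rintro m hval ⟨hr, hmm⟩
  have hru : Relator.RightUnique (fun a b : Node => nxt a = some b) := by
    intro a b c hb hc
    rw [hb] at hc; exact Option.some_injective _ hc
  have htot := Relation.ReflTransGen.total_of_right_unique hru
    (hreach nxm1 hm) hr
  rcases htot with h | h
  · rcases h.cases_head with rfl | ⟨c, hc, hcm⟩
    · exact absurd hval (ne_of_lt h1)
    · have : c = nx := hru hc hadj
      subst this
      have := mono _ _ hcm
      omega
  · have := mono _ _ h
    omega
end
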